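/- Let n > 2 and suppose N = 3·2^n + 1 is prime. Define s_0 = 4, s_{k+1} = s_k² − 2. Then N divides (s_{n−1} + 1)(s_{n−1} − 2). -/

import Mathlib

def lucasLehmerSeq : ℕ → ℤ
  | 0 => 4
  | k + 1 => lucasLehmerSeq k ^ 2 - 2

theorem three_pow_two_add_one_test (n : ℕ) (hn : 2 < n)
    (hN : Nat.Prime (3 * 2 ^ n + 1)) :
    ((3 * 2 ^ n + 1 : ℕ) : ℤ) ∣
      (lucasLehmerSeq (n - 1) + 1) * (lucasLehmerSeq (n - 1) - 2) := by
  obtain ⟨m, rfl⟩ : ∃ m, n = m + 3 := ⟨n - 3, by omega⟩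
  set n := m + 3 with hn'
  set N := 3 * 2 ^ n + 1 with hNdef
  haveI : Fact (Nat.Prime N) := ⟨hN⟩
  haveI : Fact (Nat.Prime 3) := ⟨by norm_num⟩
  have hpow : 2 ^ n = 8 * 2 ^ m := by rw [hn', pow_add]; ring
  have h8 : N % 8 = 1 := by omega
  have h4 : N % 4 = 1 := by omega
  have h3 : N % 3 = 1 := by omega
  have hN2 : N ≠ 2 := by omega
  have hm1 : 1 ≤ 2 ^ m := Nat.one_le_two_pow
  have h20 : (2 : ZMod N) ≠ 0 := by
    intro h
    have h2 : ((2 : ℕ) : ZMod N) = 0 := by exact_mod_cast h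
    have := (ZMod.natCast_eq_zero_iff 2 N).mp h2
    have := Nat.le_of_dvd (by norm_num) this
    omega
  -- square roots of 2 and 3 in ZMod N
  obtain ⟨b, hb⟩ : IsSquare (2 : ZMod N) :=
    (ZMod.exists_sq_eq_two_iff hN2).mpr (Or.inl h8)
  obtain ⟨t, ht⟩ : IsSquare ((3 : ℕ) : ZMod N) := by
    rw [ZMod.exists_sq_eq_prime_iff_of_mod_four_eq_one h4 (by norm_num)]
    have : ((N : ℕ) : ZMod 3) = ((N % 3 : ℕ) : ZMod 3) := (ZMod.natCast_mod N 3).symm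
    rw [this, h3]
    exact IsSquare.one
  push_cast at ht
  have hb2 : b * b = 2 := hb.symm
  have ht2 : t * t = 3 := ht.symm
  have hbne : b ≠ 0 := by
    intro h; rw [h, mul_zero] at hb2; exact h20 hb2.symm
  -- ω = 2 + t, ω⁻¹ = 2 - t
  set ω : ZMod N := 2 + t with hω
  set ωi : ZMod N := 2 - t with hωi
  have hωωi : ω * ωi = 1 := by rw [hω, hωi]; linear_combination -ht2
  -- u with u ^ 2 = ω
  set u : ZMod N := (1 + t) * b⁻¹ with hu
  have hbinv : b⁻¹ * b = 1 := inv_mul_cancel₀ hbne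
  have hu2 : u ^ 2 = ω := by
    have h2 : u ^ 2 * 2 = ω * 2 := by
      calc u ^ 2 * 2 = ((1 + t) * b⁻¹) ^ 2 * (b * b) := by rw [hb2, hu]
        _ = (1 + t) ^ 2 * (b⁻¹ * b) ^ 2 := by ring
        _ = (1 + t) ^ 2 := by rw [hbinv]; ring
        _ = ω * 2 := by rw [hω]; linear_combination ht2
    exact mul_right_cancel₀ h20 h2
  have hune : u ≠ 0 := by
    intro h
    rw [h] at hu2
    rw [← hu2] at hωωi
    simp at hωωi
  -- lucasLehmerSeq in ZMod N
  have key : ∀ k, ((lucasLehmerSeq k : ℤ) : ZMod N) = ω ^ (2 ^ k) + ωi ^ (2 ^ k) := by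
    intro k
    induction k with
    | zero =>
      rw [show lucasLehmerSeq 0 = 4 from rfl]
      push_cast
      rw [hω, hωi]
      ring
    | succ k ih =>
      have hs : ((lucasLehmerSeq (k + 1) : ℤ) : ZMod N)
          = ((lucasLehmerSeq k : ℤ) : ZMod N) ^ 2 - 2 := by
        rw [show lucasLehmerSeq (k + 1) = lucasLehmerSeq k ^ 2 - 2 from rfl]
        push_cast; ring
      have h1 : ω ^ 2 ^ k * ωi ^ 2 ^ k = 1 := by rw [← mul_pow, hωωi, one_pow]
      have h2 : ∀ x : ZMod N, x ^ 2 ^ (k + 1) = (x ^ 2 ^ k) ^ 2 := fun x => by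
        rw [← pow_mul, pow_succ]
      rw [hs, ih, h2, h2]
      linear_combination 2 * h1
  -- a = ω ^ 2^(n-1)
  set a : ZMod N := ω ^ (2 ^ (n - 1)) with ha
  have hai : a * ωi ^ (2 ^ (n - 1)) = 1 := by
    rw [ha, ← mul_pow, hωωi, one_pow]
  have ha3 : a ^ 3 = 1 := by
    have hstep : a ^ 3 = u ^ (N - 1) := by
      rw [ha, ← hu2, ← pow_mul, ← pow_mul]
      congr 1
      have hn1 : n - 1 = m + 2 := by omega
      rw [hn1, hNdef, hn', show m + 3 = (m + 2) + 1 from rfl, pow_succ]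
      have h2 : 2 ^ (m + 2 + 1) = 2 ^ (m + 1) * 2 * 2 := by
        rw [pow_succ, pow_succ]
      omega
    rw [hstep, ZMod.pow_card_sub_one_eq_one hune]
  have hinv : ωi ^ (2 ^ (n - 1)) = a ^ 2 := by
    calc ωi ^ (2 ^ (n - 1)) = 1 * ωi ^ (2 ^ (n - 1)) := (one_mul _).symm
      _ = a ^ 3 * ωi ^ (2 ^ (n - 1)) := by rw [ha3]
      _ = a ^ 2 * (a * ωi ^ (2 ^ (n - 1))) := by ring
      _ = a ^ 2 := by rw [hai, mul_one]
  -- finish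
  have main : (((lucasLehmerSeq (n - 1) + 1) * (lucasLehmerSeq (n - 1) - 2) : ℤ) : ZMod N) = 0 := by
    push_cast
    rw [key, hinv, ← ha]
    linear_combination (a + 2) * ha3
  exact (ZMod.intCast_zmod_eq_zero_iff_dvd _ N).mp main
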